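/- Let (S, 0) be a pointed metrizable topological space. Then the group Homeo̰₊^{(S,0)}(ℝ, 0) is left-orderable. -/

import Mathlib

open Filter Topology Set

variable (S : Type*) [TopologicalSpace S] (s₀ : S)

/-- Data representing a local homeomorphism `F` of an open neighborhood of
`(0, s₀)` in `ℝ × S` of the form `F (x, s) = (h_s x, s)`, where each `h_s` is a
local orientation-preserving (strictly increasing) homeomorphism of `ℝ`, with
`F (0, s₀) = (0, s₀)`, together with a local inverse `G`. -/
structure ParamLocalHomeo where
  F : ℝ × S → ℝ × S
  G : ℝ × S → ℝ × S
  U : Set (ℝ × S)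
  V : Set (ℝ × S)
  isOpen_U : IsOpen U
  isOpen_V : IsOpen V
  mem_U : ((0 : ℝ), s₀) ∈ U
  mem_V : ((0 : ℝ), s₀) ∈ V
  contF : ContinuousOn F U
  contG : ContinuousOn G V
  mapsF : Set.MapsTo F U V
  mapsG : Set.MapsTo G V U
  leftInv : ∀ p ∈ U, G (F p) = p
  rightInv : ∀ p ∈ V, F (G p) = p
  snd_eq : ∀ p ∈ U, (F p).2 = p.2
  mono : ∀ p ∈ U, ∀ q ∈ U, p.2 = q.2 → p.1 < q.1 → (F p).1 < (F q).1
  fixes : F ((0 : ℝ), s₀) = ((0 : ℝ), s₀)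

namespace ParamLocalHomeo

variable {S s₀}

instance setoid : Setoid (ParamLocalHomeo S s₀) where
  r d e := d.F =ᶠ[nhds ((0 : ℝ), s₀)] e.F
  iseqv := ⟨fun _ => Filter.EventuallyEq.refl _ _,
    fun h => h.symm, fun h h' => h.trans h'⟩

lemma G_fixes (d : ParamLocalHomeo S s₀) : d.G ((0 : ℝ), s₀) = ((0 : ℝ), s₀) := by
  have h := d.leftInv _ d.mem_U
  rw [d.fixes] at h
  exact h

lemma G_snd_eq (d : ParamLocalHomeo S s₀) : ∀ p ∈ d.V, (d.G p).2 = p.2 := by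
  intro p hp
  have h := d.snd_eq (d.G p) (d.mapsG hp)
  rw [d.rightInv p hp] at h
  exact h.symm

def one : ParamLocalHomeo S s₀ where
  F := id
  G := id
  U := Set.univ
  V := Set.univ
  isOpen_U := isOpen_univ
  isOpen_V := isOpen_univ
  mem_U := trivial
  mem_V := trivial
  contF := continuousOn_id
  contG := continuousOn_id
  mapsF := fun _ _ => trivial
  mapsG := fun _ _ => trivial
  leftInv := fun _ _ => rfl
  rightInv := fun _ _ => rfl
  snd_eq := fun _ _ => rfl
  mono := fun _ _ _ _ _ h => h
  fixes := rfl

def comp (d e : ParamLocalHomeo S s₀) : ParamLocalHomeo S s₀ where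
  F := d.F ∘ e.F
  G := e.G ∘ d.G
  U := e.U ∩ e.F ⁻¹' d.U
  V := d.V ∩ d.G ⁻¹' e.V
  isOpen_U := e.contF.isOpen_inter_preimage e.isOpen_U d.isOpen_U
  isOpen_V := d.contG.isOpen_inter_preimage d.isOpen_V e.isOpen_V
  mem_U := ⟨e.mem_U, by simp only [Set.mem_preimage, e.fixes]; exact d.mem_U⟩
  mem_V := ⟨d.mem_V, by simp only [Set.mem_preimage, d.G_fixes]; exact e.mem_V⟩
  contF := d.contF.comp (e.contF.mono Set.inter_subset_left) (fun x hx => hx.2)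
  contG := e.contG.comp (d.contG.mono Set.inter_subset_left) (fun x hx => hx.2)
  mapsF := by
    rintro p ⟨hp1, hp2⟩
    refine ⟨d.mapsF hp2, ?_⟩
    simp only [Set.mem_preimage, Function.comp_apply]
    rw [d.leftInv _ hp2]
    exact e.mapsF hp1
  mapsG := by
    rintro q ⟨hq1, hq2⟩
    refine ⟨e.mapsG hq2, ?_⟩
    simp only [Set.mem_preimage, Function.comp_apply]
    rw [e.rightInv _ hq2]
    exact d.mapsG hq1
  leftInv := by
    rintro p ⟨hp1, hp2⟩
    simp only [Function.comp_apply]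
    rw [d.leftInv _ hp2, e.leftInv _ hp1]
  rightInv := by
    rintro q ⟨hq1, hq2⟩
    simp only [Function.comp_apply]
    rw [e.rightInv _ hq2, d.rightInv _ hq1]
  snd_eq := by
    rintro p ⟨hp1, hp2⟩
    simp only [Function.comp_apply]
    rw [d.snd_eq _ hp2, e.snd_eq _ hp1]
  mono := by
    rintro p ⟨hp1, hp2⟩ q ⟨hq1, hq2⟩ hpq hlt
    refine d.mono _ hp2 _ hq2 ?_ (e.mono _ hp1 _ hq1 hpq hlt)
    rw [e.snd_eq _ hp1, e.snd_eq _ hq1, hpq]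
  fixes := by simp only [Function.comp_apply, e.fixes, d.fixes]

def inv (d : ParamLocalHomeo S s₀) : ParamLocalHomeo S s₀ where
  F := d.G
  G := d.F
  U := d.V
  V := d.U
  isOpen_U := d.isOpen_V
  isOpen_V := d.isOpen_U
  mem_U := d.mem_V
  mem_V := d.mem_U
  contF := d.contG
  contG := d.contF
  mapsF := d.mapsG
  mapsG := d.mapsF
  leftInv := d.rightInv
  rightInv := d.leftInv
  snd_eq := d.G_snd_eq
  mono := by
    intro p hp q hq hpq hlt
    have hGp := d.mapsG hp
    have hGq := d.mapsG hq
    have hsnd : (d.G p).2 = (d.G q).2 := by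
      rw [d.G_snd_eq p hp, d.G_snd_eq q hq, hpq]
    rcases lt_trichotomy (d.G p).1 (d.G q).1 with h | h | h
    · exact h
    · exfalso
      have : d.G p = d.G q := Prod.ext h hsnd
      have : p = q := by rw [← d.rightInv p hp, ← d.rightInv q hq, this]
      exact absurd (congrArg Prod.fst this) (ne_of_lt hlt)
    · exfalso
      have := d.mono _ hGq _ hGp hsnd.symm h
      rw [d.rightInv p hp, d.rightInv q hq] at this
      exact absurd hlt (not_lt.mpr this.le)
  fixes := d.G_fixes

lemma comp_sound {d₁ e₁ d₂ e₂ : ParamLocalHomeo S s₀} (h₁ : d₁ ≈ e₁) (h₂ : d₂ ≈ e₂) :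
    comp d₁ d₂ ≈ comp e₁ e₂ := by
  have hc : ContinuousAt d₂.F ((0 : ℝ), s₀) :=
    d₂.contF.continuousAt (d₂.isOpen_U.mem_nhds d₂.mem_U)
  have ht : Tendsto d₂.F (nhds ((0 : ℝ), s₀)) (nhds ((0 : ℝ), s₀)) := by
    have := hc.tendsto
    rwa [d₂.fixes] at this
  exact (h₁.comp_tendsto ht).trans (h₂.fun_comp e₁.F)

lemma inv_sound {d e : ParamLocalHomeo S s₀} (h : d ≈ e) : inv d ≈ inv e := by
  obtain ⟨s, hs, hseq⟩ := Filter.eventuallyEq_iff_exists_mem.mp h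
  obtain ⟨W, hWs, hWopen, hW0⟩ := mem_nhds_iff.mp hs
  set A : Set (ℝ × S) := d.U ∩ e.U ∩ W with hA
  have hAopen : IsOpen A := (d.isOpen_U.inter e.isOpen_U).inter hWopen
  have hA0 : ((0 : ℝ), s₀) ∈ A := ⟨⟨d.mem_U, e.mem_U⟩, hW0⟩
  have hBopen : IsOpen (d.V ∩ d.G ⁻¹' A) := d.contG.isOpen_inter_preimage d.isOpen_V hAopen
  have hB0 : ((0 : ℝ), s₀) ∈ d.V ∩ d.G ⁻¹' A :=
    ⟨d.mem_V, by simp only [Set.mem_preimage, d.G_fixes]; exact hA0⟩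
  apply Filter.eventuallyEq_of_mem (hBopen.mem_nhds hB0)
  rintro q ⟨hq1, hq2⟩
  simp only [Set.mem_preimage] at hq2
  obtain ⟨⟨hxU, hxU'⟩, hxW⟩ := hq2
  show d.G q = e.G q
  have h1 : d.F (d.G q) = q := d.rightInv q hq1
  have h2 : e.F (d.G q) = q := by rw [← hseq (hWs hxW)]; exact h1
  calc d.G q = e.G (e.F (d.G q)) := (e.leftInv _ hxU').symm
    _ = e.G q := by rw [h2]

end ParamLocalHomeo

/-- The group `Homeo̰₊^{(S,s₀)}(ℝ, 0)` of germs at `(0, s₀)` of local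
homeomorphisms of `ℝ × S` of the form `(x, s) ↦ (h_s x, s)`, fixing `(0, s₀)`,
under composition of germs. -/
def ParamGermHomeoPlus : Type _ := Quotient (ParamLocalHomeo.setoid (S := S) (s₀ := s₀))

namespace ParamGermHomeoPlus

instance : Group (ParamGermHomeoPlus S s₀) where
  mul := Quotient.map₂ ParamLocalHomeo.comp
    (fun _ _ h₁ _ _ h₂ => ParamLocalHomeo.comp_sound h₁ h₂)
  one := ⟦ParamLocalHomeo.one⟧
  inv := Quotient.map ParamLocalHomeo.inv (fun _ _ h => ParamLocalHomeo.inv_sound h)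
  mul_assoc a b c := by
    induction a using Quotient.ind
    induction b using Quotient.ind
    induction c using Quotient.ind
    exact Quotient.sound (Filter.EventuallyEq.refl _ _)
  one_mul a := by
    induction a using Quotient.ind
    exact Quotient.sound (Filter.EventuallyEq.refl _ _)
  mul_one a := by
    induction a using Quotient.ind
    exact Quotient.sound (Filter.EventuallyEq.refl _ _)
  inv_mul_cancel a := by
    induction a using Quotient.ind
    rename_i d
    apply Quotient.sound
    apply Filter.eventuallyEq_of_mem (d.isOpen_U.mem_nhds d.mem_U)
    intro p hp
    exact d.leftInv p hp

end ParamGermHomeoPlus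

/-- A group is left-orderable if it admits a linear order invariant under
left multiplication: `g ≺ h` implies `f * g ≺ f * h`. -/
def IsLeftOrderable (G : Type*) [Group G] : Prop :=
  ∃ r : LinearOrder G, ∀ f g h : G, r.lt g h → r.lt (f * g) (f * h)

namespace LOAux

open scoped Classical

variable {S : Type*} [TopologicalSpace S] {s₀ : S}

/-- Sequences converging to `(0, s₀)`. -/
def Om (S : Type*) [TopologicalSpace S] (s₀ : S) : Type _ :=
  {p : ℕ → ℝ × S // Tendsto p atTop (𝓝 ((0 : ℝ), s₀))}

/-- A fixed nonprincipal ultrafilter on `ℕ`. -/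
noncomputable def U0 : Ultrafilter ℕ := Ultrafilter.of Filter.cofinite

lemma U0_le_atTop : (U0 : Filter ℕ) ≤ atTop := by
  rw [← Nat.cofinite_eq_atTop]; exact Ultrafilter.of_le _

/-- Action of a representative on a converging sequence. -/
noncomputable def act (d : ParamLocalHomeo S s₀) (p : Om S s₀) : Om S s₀ := by
  refine ⟨fun n => if p.1 n ∈ d.U then d.F (p.1 n) else p.1 n, ?_⟩
  have hU : d.U ∈ 𝓝 ((0 : ℝ), s₀) := d.isOpen_U.mem_nhds d.mem_U
  have h1 : ∀ᶠ n in atTop, p.1 n ∈ d.U := p.2 hU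
  have h2 : Tendsto (fun n => d.F (p.1 n)) atTop (𝓝 ((0 : ℝ), s₀)) := by
    have hc : ContinuousAt d.F ((0 : ℝ), s₀) := d.contF.continuousAt hU
    have := hc.tendsto.comp p.2
    rwa [d.fixes] at this
  refine h2.congr' (h1.mono fun n hn => ?_)
  simp [hn]

lemma act_mem (d : ParamLocalHomeo S s₀) (p : Om S s₀) {n : ℕ} (hn : p.1 n ∈ d.U) :
    (act d p).1 n = d.F (p.1 n) := if_pos hn

lemma ev_mem_U (d : ParamLocalHomeo S s₀) (p : Om S s₀) :
    ∀ᶠ n in (U0 : Filter ℕ), p.1 n ∈ d.U :=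
  U0_le_atTop (p.2 (d.isOpen_U.mem_nhds d.mem_U))

/-- Equality along the ultrafilter. -/
def req (p q : Om S s₀) : Prop := ∀ᶠ n in (U0 : Filter ℕ), p.1 n = q.1 n

/-- Strict comparison along the ultrafilter. -/
def rlt (p q : Om S s₀) : Prop :=
  ∀ᶠ n in (U0 : Filter ℕ), (p.1 n).2 = (q.1 n).2 ∧ (p.1 n).1 < (q.1 n).1

lemma req_refl (p : Om S s₀) : req p p := Filter.Eventually.of_forall fun _ => rfl

lemma req_symm {p q : Om S s₀} (h : req p q) : req q p := h.mono fun _ h => h.symm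

lemma req_trans {p q r : Om S s₀} (h : req p q) (h' : req q r) : req p r :=
  (h.and h').mono fun _ ⟨h1, h2⟩ => h1.trans h2

lemma rlt_trans {p q r : Om S s₀} (h : rlt p q) (h' : rlt q r) : rlt p r :=
  (h.and h').mono fun _ ⟨⟨a1, a2⟩, ⟨b1, b2⟩⟩ => ⟨a1.trans b1, a2.trans b2⟩

lemma rlt_of_rlt_req {p q r : Om S s₀} (h : rlt p q) (h' : req q r) : rlt p r :=
  (h.and h').mono fun _ ⟨⟨a1, a2⟩, b⟩ => ⟨a1.trans (congrArg Prod.snd b), b ▸ a2⟩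

lemma rlt_of_req_rlt {p q r : Om S s₀} (h : req p q) (h' : rlt q r) : rlt p r :=
  (h.and h').mono fun _ ⟨b, ⟨a1, a2⟩⟩ => ⟨(congrArg Prod.snd b).trans a1, b ▸ a2⟩

lemma not_req_of_rlt {p q : Om S s₀} (h : rlt p q) : ¬ req p q := by
  intro h'
  obtain ⟨n, ⟨-, hlt⟩, heq⟩ := (h.and h').exists
  rw [heq] at hlt
  exact lt_irrefl _ hlt

lemma rlt_asymm {p q : Om S s₀} (h : rlt p q) (h' : rlt q p) : False := by
  obtain ⟨n, ⟨-, h1⟩, ⟨-, h2⟩⟩ := (h.and h').exists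
  exact lt_irrefl _ (h1.trans h2)

lemma rlt_congr {p p' q q' : Om S s₀} (hp : req p p') (hq : req q q') :
    rlt p q ↔ rlt p' q' := by
  constructor
  · intro h; exact rlt_of_req_rlt (req_symm hp) (rlt_of_rlt_req h hq)
  · intro h; exact rlt_of_req_rlt hp (rlt_of_rlt_req h (req_symm hq))

lemma act_congr {d e : ParamLocalHomeo S s₀} (h : d ≈ e) (p : Om S s₀) :
    req (act d p) (act e p) := by
  obtain ⟨s, hs, hseq⟩ := Filter.eventuallyEq_iff_exists_mem.mp h
  have h1 : ∀ᶠ n in (U0 : Filter ℕ), p.1 n ∈ s := U0_le_atTop (p.2 hs)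
  filter_upwards [h1, ev_mem_U d p, ev_mem_U e p] with n hns hnd hne
  rw [act_mem d p hnd, act_mem e p hne, hseq hns]

lemma act_req {d : ParamLocalHomeo S s₀} {p q : Om S s₀} (h : req p q) :
    req (act d p) (act d q) := by
  filter_upwards [h] with n hn
  show (if p.1 n ∈ d.U then d.F (p.1 n) else p.1 n)
      = (if q.1 n ∈ d.U then d.F (q.1 n) else q.1 n)
  rw [hn]

lemma act_req_iff (d : ParamLocalHomeo S s₀) (p q : Om S s₀) :
    req (act d p) (act d q) ↔ req p q := by
  refine ⟨fun h => ?_, act_req⟩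
  filter_upwards [h, ev_mem_U d p, ev_mem_U d q] with n hn hp hq
  rw [act_mem d p hp, act_mem d q hq] at hn
  have := congrArg d.G hn
  rwa [d.leftInv _ hp, d.leftInv _ hq] at this

lemma act_rlt {d : ParamLocalHomeo S s₀} {p q : Om S s₀} (h : rlt p q) :
    rlt (act d p) (act d q) := by
  filter_upwards [h, ev_mem_U d p, ev_mem_U d q] with n hpair hp hq
  obtain ⟨hsnd, hlt⟩ := hpair
  rw [act_mem d p hp, act_mem d q hq]
  exact ⟨(d.snd_eq _ hp).trans (hsnd.trans (d.snd_eq _ hq).symm),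
    d.mono _ hp _ hq hsnd hlt⟩

lemma act_comp (d e : ParamLocalHomeo S s₀) (p : Om S s₀) :
    req (act (d.comp e) p) (act d (act e p)) := by
  filter_upwards [ev_mem_U (d.comp e) p] with n hn
  have hne : p.1 n ∈ e.U := hn.1
  have hnd : e.F (p.1 n) ∈ d.U := hn.2
  rw [act_mem (d.comp e) p hn]
  have h1 : (act e p).1 n = e.F (p.1 n) := act_mem e p hne
  have h2 : (act e p).1 n ∈ d.U := by rw [h1]; exact hnd
  rw [act_mem d (act e p) h2, h1]
  rfl

lemma tri (d e : ParamLocalHomeo S s₀) (p : Om S s₀) :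
    rlt (act d p) (act e p) ∨ req (act d p) (act e p) ∨ rlt (act e p) (act d p) := by
  have hsnd : ∀ᶠ n in (U0 : Filter ℕ),
      ((act d p).1 n).2 = ((act e p).1 n).2 := by
    filter_upwards [ev_mem_U d p, ev_mem_U e p] with n hp hq
    rw [act_mem d p hp, act_mem e p hq, d.snd_eq _ hp, e.snd_eq _ hq]
  have key : ∀ᶠ n in (U0 : Filter ℕ),
      (((act d p).1 n).2 = ((act e p).1 n).2 ∧ ((act d p).1 n).1 < ((act e p).1 n).1)
      ∨ ((act d p).1 n = (act e p).1 n
      ∨ (((act e p).1 n).2 = ((act d p).1 n).2 ∧ ((act e p).1 n).1 < ((act d p).1 n).1)) := by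
    filter_upwards [hsnd] with n hs
    rcases lt_trichotomy ((act d p).1 n).1 ((act e p).1 n).1 with h | h | h
    · exact Or.inl ⟨hs, h⟩
    · exact Or.inr (Or.inl (Prod.ext h hs))
    · exact Or.inr (Or.inr ⟨hs.symm, h⟩)
  rcases Ultrafilter.eventually_or.mp key with h | h
  · exact Or.inl h
  rcases Ultrafilter.eventually_or.mp h with h | h
  · exact Or.inr (Or.inl h)
  · exact Or.inr (Or.inr h)

/-- The set of sequences where two representatives differ. -/
def D (d e : ParamLocalHomeo S s₀) : Set (Om S s₀) :=
  {p | ¬ req (act d p) (act e p)}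

lemma D_congr {d d' e e' : ParamLocalHomeo S s₀} (hd : d ≈ d') (he : e ≈ e') :
    D d e = D d' e' := by
  ext p
  simp only [D, Set.mem_setOf_eq]
  constructor
  · intro h h'
    exact h (req_trans (act_congr hd p) (req_trans h' (req_symm (act_congr he p))))
  · intro h h'
    exact h (req_trans (req_symm (act_congr hd p)) (req_trans h' (act_congr he p)))

lemma D_symm (d e : ParamLocalHomeo S s₀) : D d e = D e d := by
  ext p
  simp only [D, Set.mem_setOf_eq]
  exact ⟨fun h h' => h (req_symm h'), fun h h' => h (req_symm h')⟩

lemma D_empty_of_equiv {d e : ParamLocalHomeo S s₀} (h : d ≈ e) : D d e = ∅ := by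
  ext p
  simp only [D, Set.mem_setOf_eq, Set.mem_empty_iff_false, iff_false, not_not]
  exact act_congr h p

lemma D_nonempty [TopologicalSpace.MetrizableSpace S]
    {d e : ParamLocalHomeo S s₀} (h : ¬ d ≈ e) : (D d e).Nonempty := by
  obtain ⟨B, hB⟩ := Filter.exists_antitone_basis (𝓝 ((0 : ℝ), s₀) : Filter (ℝ × S))
  have hUV : d.U ∩ e.U ∈ 𝓝 ((0 : ℝ), s₀) :=
    Filter.inter_mem (d.isOpen_U.mem_nhds d.mem_U) (e.isOpen_U.mem_nhds e.mem_U)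
  have hpick : ∀ n : ℕ, ∃ x, x ∈ B n ∩ (d.U ∩ e.U) ∧ d.F x ≠ e.F x := by
    intro n
    by_contra hc
    push_neg at hc
    apply h
    apply Filter.eventuallyEq_of_mem
      (Filter.inter_mem (hB.1.mem_of_mem (by trivial)) hUV)
    intro x hx
    exact hc x hx
  choose p hp1 hp2 using hpick
  have hten : Tendsto p atTop (𝓝 ((0 : ℝ), s₀)) :=
    hB.tendsto fun n => (hp1 n).1
  refine ⟨⟨p, hten⟩, ?_⟩
  intro hreq
  obtain ⟨n, hn⟩ := hreq.exists
  have hd : p n ∈ d.U := (hp1 n).2.1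
  have he : p n ∈ e.U := (hp1 n).2.2
  exact hp2 n ((act_mem d _ hd).symm.trans (hn.trans (act_mem e _ he)))

lemma D_comp (f d e : ParamLocalHomeo S s₀) : D (f.comp d) (f.comp e) = D d e := by
  ext p
  simp only [D, Set.mem_setOf_eq]
  have h1 : req (act (f.comp d) p) (act (f.comp e) p)
      ↔ req (act f (act d p)) (act f (act e p)) := by
    constructor
    · intro h
      exact req_trans (req_symm (act_comp f d p)) (req_trans h (act_comp f e p))
    · intro h
      exact req_trans (act_comp f d p) (req_trans h (req_symm (act_comp f e p)))
  rw [not_iff_not.mpr (h1.trans (act_req_iff f (act d p) (act e p)))]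

/-- The well-founded minimum of a nonempty difference set. -/
noncomputable def wf : WellFounded (WellOrderingRel : Om S s₀ → Om S s₀ → Prop) :=
  IsWellFounded.wf

/-- `p` is the minimum of `A` for the well-ordering. -/
def IsMin (A : Set (Om S s₀)) (p : Om S s₀) : Prop :=
  p ∈ A ∧ ∀ q ∈ A, ¬ WellOrderingRel q p

lemma isMin_unique {A : Set (Om S s₀)} {p q : Om S s₀}
    (hp : IsMin A p) (hq : IsMin A q) : p = q := by
  rcases trichotomous_of WellOrderingRel p q with h | h | h
  · exact absurd h (hq.2 p hp.1)
  · exact h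
  · exact absurd h (hp.2 q hq.1)

lemma exists_isMin {A : Set (Om S s₀)} (h : A.Nonempty) : ∃ p, IsMin A p :=
  ⟨wf.min A h, wf.min_mem A h, fun _ hq => wf.not_lt_min A hq⟩

/-- The strict order on representatives: `d` precedes `e` if at the
well-ordering-first sequence where they differ, `d` is below `e` along the
ultrafilter. -/
def LT' (d e : ParamLocalHomeo S s₀) : Prop :=
  (D d e).Nonempty ∧ ∀ p, IsMin (D d e) p → rlt (act d p) (act e p)

lemma LT'_congr {d d' e e' : ParamLocalHomeo S s₀} (hd : d ≈ d') (he : e ≈ e') :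
    LT' d e ↔ LT' d' e' := by
  unfold LT'
  rw [D_congr hd he]
  refine and_congr Iff.rfl (forall_congr' fun p => imp_congr Iff.rfl ?_)
  exact rlt_congr (act_congr hd p) (act_congr he p)

lemma LT'_irrefl (d : ParamLocalHomeo S s₀) : ¬ LT' d d := by
  rintro ⟨⟨p, hp⟩, -⟩
  exact hp (req_refl (act d p))

lemma LT'_asymm {d e : ParamLocalHomeo S s₀} (h : LT' d e) (h' : LT' e d) : False := by
  obtain ⟨hne, hmin⟩ := h
  obtain ⟨p, hp⟩ := exists_isMin hne
  have hp' : IsMin (D e d) p := by rwa [D_symm] at hp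
  exact rlt_asymm (hmin p hp) (h'.2 p hp')

lemma LT'_trans {d e f : ParamLocalHomeo S s₀} (h : LT' d e) (h' : LT' e f) :
    LT' d f := by
  obtain ⟨hne, hmin⟩ := h
  obtain ⟨hne', hmin'⟩ := h'
  have hU : (D d e ∪ D e f).Nonempty := hne.mono Set.subset_union_left
  obtain ⟨m, hmem, hmmin⟩ := exists_isMin hU
  -- below m, all three actions agree
  have below : ∀ q, WellOrderingRel q m → q ∉ D d f := by
    intro q hq hqf
    have h1 : q ∉ D d e := fun h => hmmin q (Or.inl h) hq
    have h2 : q ∉ D e f := fun h => hmmin q (Or.inr h) hq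
    simp only [D, Set.mem_setOf_eq, not_not] at h1 h2
    exact hqf (req_trans h1 h2)
  have hrlt : rlt (act d m) (act f m) := by
    rcases hmem with hm | hm
    · have hmde : IsMin (D d e) m :=
        ⟨hm, fun q hq => hmmin q (Or.inl hq)⟩
      have h1 := hmin m hmde
      by_cases hm2 : m ∈ D e f
      · have hmef : IsMin (D e f) m := ⟨hm2, fun q hq => hmmin q (Or.inr hq)⟩
        exact rlt_trans h1 (hmin' m hmef)
      · simp only [D, Set.mem_setOf_eq, not_not] at hm2
        exact rlt_of_rlt_req h1 hm2
    · have hmef : IsMin (D e f) m := ⟨hm, fun q hq => hmmin q (Or.inr hq)⟩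
      have h2 := hmin' m hmef
      by_cases hm1 : m ∈ D d e
      · have hmde : IsMin (D d e) m := ⟨hm1, fun q hq => hmmin q (Or.inl hq)⟩
        exact rlt_trans (hmin m hmde) h2
      · simp only [D, Set.mem_setOf_eq, not_not] at hm1
        exact rlt_of_req_rlt hm1 h2
  have hmdf : m ∈ D d f := not_req_of_rlt hrlt
  have hmmindf : IsMin (D d f) m :=
    ⟨hmdf, fun q hq hlt => below q hlt hq⟩
  refine ⟨⟨m, hmdf⟩, fun p hp => ?_⟩
  rwa [isMin_unique hp hmmindf]

lemma LT'_total [TopologicalSpace.MetrizableSpace S]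
    {d e : ParamLocalHomeo S s₀} (h : ¬ d ≈ e) : LT' d e ∨ LT' e d := by
  have hne := D_nonempty h
  obtain ⟨m, hm⟩ := exists_isMin hne
  rcases tri d e m with ht | ht | ht
  · left
    exact ⟨hne, fun p hp => by rwa [isMin_unique hp hm]⟩
  · exact absurd ht hm.1
  · right
    have hm' : IsMin (D e d) m := by rwa [D_symm] at hm
    refine ⟨by rwa [D_symm] at hne, fun p hp => ?_⟩
    rwa [isMin_unique hp hm']

lemma LT'_mul {f d e : ParamLocalHomeo S s₀} (h : LT' d e) :
    LT' (f.comp d) (f.comp e) := by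
  obtain ⟨hne, hmin⟩ := h
  rw [LT', D_comp]
  refine ⟨hne, fun p hp => ?_⟩
  have h1 : rlt (act d p) (act e p) := hmin p hp
  have h2 : rlt (act f (act d p)) (act f (act e p)) := act_rlt h1
  exact rlt_of_req_rlt (act_comp f d p) (rlt_of_rlt_req h2 (req_symm (act_comp f e p)))

end LOAux

/-- For a pointed metrizable space `(S, s₀)`, the group
`Homeo̰₊^{(S,s₀)}(ℝ, 0)` of germs at `(0, s₀)` of parametrized local
homeomorphisms is left-orderable. -/
theorem paramGermHomeoPlus_isLeftOrderable {S : Type*} [TopologicalSpace S]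
    [TopologicalSpace.MetrizableSpace S] (s₀ : S) :
    IsLeftOrderable (ParamGermHomeoPlus S s₀) := by
  classical
  set G := ParamGermHomeoPlus S s₀ with hG
  -- lift the strict order to germs
  let ltG : G → G → Prop := Quotient.lift₂ LOAux.LT'
    (fun _ _ _ _ hd he => propext (LOAux.LT'_congr hd he))
  have lt_mk : ∀ d e : ParamLocalHomeo S s₀, ltG ⟦d⟧ ⟦e⟧ = LOAux.LT' d e :=
    fun _ _ => rfl
  have hirr : ∀ a : G, ¬ ltG a a := by
    intro a
    induction a using Quotient.ind with
    | _ d => exact LOAux.LT'_irrefl d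
  have htrans : ∀ a b c : G, ltG a b → ltG b c → ltG a c := by
    intro a b c
    induction a using Quotient.ind
    induction b using Quotient.ind
    induction c using Quotient.ind
    exact LOAux.LT'_trans
  have hasymm : ∀ a b : G, ltG a b → ltG b a → False := by
    intro a b
    induction a using Quotient.ind
    induction b using Quotient.ind
    exact LOAux.LT'_asymm
  have htotal : ∀ a b : G, a ≠ b → ltG a b ∨ ltG b a := by
    intro a b
    induction a using Quotient.ind with
    | _ d =>
    induction b using Quotient.ind with
    | _ e =>
    intro hne
    exact LOAux.LT'_total (fun h => hne (Quotient.sound h))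
  have hmul : ∀ f a b : G, ltG a b → ltG (f * a) (f * b) := by
    intro f a b
    induction f using Quotient.ind
    induction a using Quotient.ind
    induction b using Quotient.ind
    exact LOAux.LT'_mul
  refine ⟨{
      le := fun a b => ltG a b ∨ a = b
      lt := ltG
      le_refl := fun a => Or.inr rfl
      le_trans := fun a b c hab hbc => by
        rcases hab with h | rfl
        · rcases hbc with h' | rfl
          · exact Or.inl (htrans a b c h h')
          · exact Or.inl h
        · exact hbc
      lt_iff_le_not_ge := fun a b => by
        constructor
        · intro h
          refine ⟨Or.inl h, ?_⟩
          rintro (h' | rfl)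
          · exact hasymm a b h h'
          · exact hirr _ h
        · rintro ⟨h1 | rfl, h2⟩
          · exact h1
          · exact absurd (Or.inr rfl) h2
      le_antisymm := fun a b hab hba => by
        rcases hab with h | h
        · rcases hba with h' | h'
          · exact absurd h' (fun h' => hasymm a b h h')
          · exact h'.symm
        · exact h
      le_total := fun a b => by
        rcases eq_or_ne a b with rfl | hne
        · exact Or.inl (Or.inr rfl)
        · rcases htotal a b hne with h | h
          · exact Or.inl (Or.inl h)
          · exact Or.inr (Or.inl h)
      toDecidableLE := fun a b => Classical.dec _ }, ?_⟩
  intro f g h hgh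
  exact hmul f g h hgh
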